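/- Proposition 7(1): Fix π₀ ∈ (0,1) and n ∈ ℕ. For γ > 1 and κ > 1, set p = γ(κ−1)/((γ+1)κ) and q = (κ−1)/((γ+1)κ) (so that p/q = γ and 1/(1−p−q) = κ), α = (1 − √(1−4pq))/2, and W_n(γ, κ) = 1 / (1 + ((1−π₀)/π₀)·((p−α)/(q−α))·γ^{−(n+1)}). Then for every fixed γ > 1, the map κ ↦ W_n(γ, κ) is strictly decreasing on (1, ∞). -/
import Mathlib


/-- The sender's equilibrium value `V_n` reparametrized by the signal
informativeness `γ = p/q` and the expected evidence length `κ = 1/(1−p−q)`,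
via `p = γ(κ−1)/((γ+1)κ)`, `q = (κ−1)/((γ+1)κ)`. -/
noncomputable def W (π0 : ℝ) (n : ℕ) (γ κ : ℝ) : ℝ :=
  let p := γ * (κ - 1) / ((γ + 1) * κ)
  let q := (κ - 1) / ((γ + 1) * κ)
  let α := (1 - Real.sqrt (1 - 4 * p * q)) / 2
  1 / (1 + ((1 - π0) / π0) * ((p - α) / (q - α)) * γ ^ (-(n + 1 : ℤ)))

namespace Stmt17Aux

/-- Auxiliary: basic facts about `α` and `s = √(1-4γq²)` for `0 < q`, `q(γ+1) < 1`. -/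
lemma basics (γ q : ℝ) (hγ : 1 < γ) (hq : 0 < q) (hq2 : q * (γ + 1) < 1) :
    0 < 1 - 4 * γ * q ^ 2 ∧
    q - (1 - Real.sqrt (1 - 4 * γ * q ^ 2)) / 2 > 0 ∧
    γ * q - (1 - Real.sqrt (1 - 4 * γ * q ^ 2)) / 2 > 0 := by
  have harg : 0 < 1 - 4 * γ * q ^ 2 := by
    have ha : 0 < q * (γ + 1) := by positivity
    nlinarith [mul_lt_mul_of_pos_left hq2 ha, sq_nonneg ((γ - 1) * q)]
  set s := Real.sqrt (1 - 4 * γ * q ^ 2) with hs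
  have hs0 : 0 < s := Real.sqrt_pos.mpr harg
  have hssq : s ^ 2 = 1 - 4 * γ * q ^ 2 := Real.sq_sqrt harg.le
  have h1 : 1 - 2 * q < s := by nlinarith [sq_nonneg (s + (1 - 2 * q))]
  have h2 : 1 - 2 * (γ * q) < s := by
    have hgq : 0 < 1 - q - γ * q := by nlinarith
    rcases le_or_gt (1 - 2 * (γ * q)) 0 with hle | hlt
    · linarith
    · have hsum : 0 < s + (1 - 2 * (γ * q)) := by linarith
      have hprodeq : (s - (1 - 2 * (γ * q))) * (s + (1 - 2 * (γ * q)))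
          = 4 * γ * q * (1 - q - γ * q) := by linear_combination hssq
      have hrhs : 0 < 4 * γ * q * (1 - q - γ * q) := by
        have : 0 < 4 * γ * q := by nlinarith
        exact mul_pos this hgq
      nlinarith [hprodeq, hsum, hrhs]
  exact ⟨harg, by linarith, by linarith⟩

set_option maxHeartbeats 1000000 in
/-- Key monotonicity: `(γq−α)/(q−α)` is strictly increasing in `q`. -/
lemma key (γ q₁ q₂ : ℝ) (hγ : 1 < γ) (hq1 : 0 < q₁) (h12 : q₁ < q₂)
    (hq2 : q₂ * (γ + 1) < 1) :
    (γ * q₁ - (1 - Real.sqrt (1 - 4 * γ * q₁ ^ 2)) / 2) /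
      (q₁ - (1 - Real.sqrt (1 - 4 * γ * q₁ ^ 2)) / 2)
    < (γ * q₂ - (1 - Real.sqrt (1 - 4 * γ * q₂ ^ 2)) / 2) /
      (q₂ - (1 - Real.sqrt (1 - 4 * γ * q₂ ^ 2)) / 2) := by
  have hq12 : q₁ * (γ + 1) < 1 := by nlinarith
  obtain ⟨ha1, hb1, hc1⟩ := basics γ q₁ hγ hq1 hq12
  obtain ⟨ha2, hb2, hc2⟩ := basics γ q₂ hγ (hq1.trans h12) hq2
  set s₁ := Real.sqrt (1 - 4 * γ * q₁ ^ 2) with hs1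
  set s₂ := Real.sqrt (1 - 4 * γ * q₂ ^ 2) with hs2
  have hs1sq : s₁ ^ 2 = 1 - 4 * γ * q₁ ^ 2 := Real.sq_sqrt ha1.le
  have hs2sq : s₂ ^ 2 = 1 - 4 * γ * q₂ ^ 2 := Real.sq_sqrt ha2.le
  have hs10 : 0 < s₁ := Real.sqrt_pos.mpr ha1
  have hs20 : 0 < s₂ := Real.sqrt_pos.mpr ha2
  have hmono : s₂ < s₁ := by
    rw [hs1, hs2]
    apply Real.sqrt_lt_sqrt ha2.le
    nlinarith [mul_pos (sub_pos.mpr h12) (show (0:ℝ) < q₁ + q₂ by linarith), hγ]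
  -- q₁(1+s₂) < q₂(1+s₁)
  have h4 : q₁ * (1 + s₂) < q₂ * (1 + s₁) := by nlinarith
  -- (1-s₁) q₂ < (1-s₂) q₁, via multiplying by (1+s₁)(1+s₂)
  have h5 : (1 - s₁) * q₂ * ((1 + s₁) * (1 + s₂)) < (1 - s₂) * q₁ * ((1 + s₁) * (1 + s₂)) := by
    have e1 : (1 - s₁) * (1 + s₁) = 4 * γ * q₁ ^ 2 := by nlinarith
    have e2 : (1 - s₂) * (1 + s₂) = 4 * γ * q₂ ^ 2 := by nlinarith
    have : (1 - s₁) * q₂ * ((1 + s₁) * (1 + s₂)) = 4 * γ * q₁ ^ 2 * q₂ * (1 + s₂) := by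
      rw [← e1]; ring
    rw [this]
    have : (1 - s₂) * q₁ * ((1 + s₁) * (1 + s₂)) = 4 * γ * q₂ ^ 2 * q₁ * (1 + s₁) := by
      rw [← e2]; ring
    rw [this]
    have hpos : 0 < 4 * γ * q₁ * q₂ := by nlinarith [mul_pos hq1 (hq1.trans h12)]
    nlinarith [mul_lt_mul_of_pos_left h4 hpos]
  have h6 : (1 - s₁) * q₂ < (1 - s₂) * q₁ := by
    have hpos : 0 < (1 + s₁) * (1 + s₂) := by positivity
    exact lt_of_mul_lt_mul_right (by linarith [h5]) hpos.le
  -- α₁ q₂ < α₂ q₁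
  have h7 : (1 - s₁) / 2 * q₂ < (1 - s₂) / 2 * q₁ := by linarith
  rw [div_lt_div_iff₀ hb1 hb2]
  nlinarith [mul_pos (sub_pos.mpr hγ) (sub_pos.mpr (show (1 - s₁) / 2 * q₂ < (1 - s₂) / 2 * q₁ from h7))]

end Stmt17Aux

/-- Proposition 7(1): for every fixed `γ > 1`, the sender's equilibrium value
`W_n(γ, ·)` is strictly decreasing in the expected evidence length `κ` on
`(1, ∞)`. -/
theorem stmt_17 (π0 : ℝ) (h0 : 0 < π0) (h1 : π0 < 1) (n : ℕ) (γ : ℝ) (hγ : 1 < γ) :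
    StrictAntiOn (fun κ => W π0 n γ κ) (Set.Ioi (1 : ℝ)) := by
  intro κ₁ hκ₁ κ₂ hκ₂ h
  simp only [Set.mem_Ioi] at hκ₁ hκ₂
  have hγ0 : (0:ℝ) < γ := by linarith
  have hγ1 : (0:ℝ) < γ + 1 := by linarith
  set q₁ := (κ₁ - 1) / ((γ + 1) * κ₁) with hq1def
  set q₂ := (κ₂ - 1) / ((γ + 1) * κ₂) with hq2def
  have hκ10 : (0:ℝ) < κ₁ := by linarith
  have hκ20 : (0:ℝ) < κ₂ := by linarith
  have hq1pos : 0 < q₁ := by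
    apply div_pos (by linarith) (by positivity)
  have hq12 : q₁ < q₂ := by
    rw [hq1def, hq2def, div_lt_div_iff₀ (by positivity) (by positivity)]
    nlinarith
  have hq2b : q₂ * (γ + 1) < 1 := by
    rw [hq2def]
    rw [div_mul_eq_mul_div, div_lt_one (by positivity)]
    nlinarith
  have hkey := Stmt17Aux.key γ q₁ q₂ hγ hq1pos hq12 hq2b
  obtain ⟨_, hb1, hc1⟩ := Stmt17Aux.basics γ q₁ hγ hq1pos (by nlinarith)
  obtain ⟨_, hb2, hc2⟩ := Stmt17Aux.basics γ q₂ hγ (hq1pos.trans hq12) hq2b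
  -- rewrite W at each κ
  have hW : ∀ κ : ℝ, 0 < κ → W π0 n γ κ =
      1 / (1 + ((1 - π0) / π0) *
        ((γ * ((κ - 1) / ((γ + 1) * κ)) -
            (1 - Real.sqrt (1 - 4 * γ * ((κ - 1) / ((γ + 1) * κ)) ^ 2)) / 2) /
          ((κ - 1) / ((γ + 1) * κ) -
            (1 - Real.sqrt (1 - 4 * γ * ((κ - 1) / ((γ + 1) * κ)) ^ 2)) / 2)) *
        γ ^ (-(n + 1 : ℤ))) := by
    intro κ hκ
    simp only [W]
    rw [show γ * (κ - 1) / ((γ + 1) * κ) = γ * ((κ - 1) / ((γ + 1) * κ)) by ring,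
      show (4:ℝ) * (γ * ((κ - 1) / ((γ + 1) * κ))) * ((κ - 1) / ((γ + 1) * κ))
        = 4 * γ * ((κ - 1) / ((γ + 1) * κ)) ^ 2 by ring]
  show W π0 n γ κ₂ < W π0 n γ κ₁
  rw [hW κ₁ hκ10, hW κ₂ hκ20]
  have hc : 0 < (1 - π0) / π0 := div_pos (by linarith) h0
  have hz : 0 < γ ^ (-(n + 1 : ℤ)) := zpow_pos hγ0 _
  set R₁ := (γ * q₁ - (1 - Real.sqrt (1 - 4 * γ * q₁ ^ 2)) / 2) /
      (q₁ - (1 - Real.sqrt (1 - 4 * γ * q₁ ^ 2)) / 2) with hR1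
  set R₂ := (γ * q₂ - (1 - Real.sqrt (1 - 4 * γ * q₂ ^ 2)) / 2) /
      (q₂ - (1 - Real.sqrt (1 - 4 * γ * q₂ ^ 2)) / 2) with hR2
  have hR1pos : 0 < R₁ := div_pos hc1 hb1
  apply one_div_lt_one_div_of_lt
  · have : 0 < ((1 - π0) / π0) * R₁ * γ ^ (-(n + 1 : ℤ)) := by positivity
    linarith
  · have : ((1 - π0) / π0) * R₁ * γ ^ (-(n + 1 : ℤ))
        < ((1 - π0) / π0) * R₂ * γ ^ (-(n + 1 : ℤ)) := by
      apply mul_lt_mul_of_pos_right _ hz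
      exact mul_lt_mul_of_pos_left hkey hc
    linarith
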